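/- Fix an integer n ≥ 3 and let G(z, α) denote the mixed second partial derivative ∂²g(n, z, α)/∂z∂α (first differentiate g in α, then in z), for z ∈ (0,1) ∪ (1,∞) and real α. With z₁(β) = (n−1)^{1/β} for β ≠ 0 and z₂(α) = (n−1)^{1/(2α−1)} for α ≠ 1/2, the following hold (z always ranging over (0,1) ∪ (1,∞)): (i) for each α < 0 there exists γ ∈ (z₁(2α), z₂(α)) such that G(z, α) > 0 for z < γ, G(γ, α) = 0, and G(z, α) < 0 for z > γ; (ii) G(z, 0) < 0 for all z; (iii) for each α ∈ (0, 1/2) there exists γ ∈ (n−1, z₁(2α)) such that G(z, α) < 0 for z < γ, G(γ, α) = 0, and G(z, α) > 0 for z > γ; (iv) G(z, 1/2) < 0 for z < n−1, G(n−1, 1/2) = 0, and G(z, 1/2) > 0 for z > n−1; (v) for each α ∈ (1/2, 1) there exists γ ∈ (z₁(2α), n−1) such that G(z, α) < 0 for z < γ, G(γ, α) = 0, and G(z, α) > 0 for z > γ; (vi) G(z, 1) = 0 for all z; (vii) for each α > 1 there exists γ ∈ (z₁(2α), z₂(α)) such that G(z, α) > 0 for z < γ, G(γ, α) = 0, and G(z,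 α) < 0 for z > γ. -/

import Mathlib

open Real Set

/-- `g(n, z, α) = (α−1) + ((n−1) + z^α)(z^{1−α} − 1)/(((n−1) + z) ln z)`. -/
noncomputable def gZ (n : ℕ) (z α : ℝ) : ℝ :=
  (α - 1) + (((n : ℝ) - 1) + z ^ α) * (z ^ (1 - α) - 1) / ((((n : ℝ) - 1) + z) * Real.log z)

/-- The mixed second partial derivative `∂²g/∂z∂α`: first differentiate `g` in `α`,
then in `z`. -/
noncomputable def Gmix (n : ℕ) (z α : ℝ) : ℝ :=
  deriv (fun z' => deriv (fun a => gZ n z' a) α) z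

noncomputable def Fq (b z α : ℝ) : ℝ :=
  α * b * (z - z ^ (2*α - 1)) + (1 - α) * (z ^ (2*α) - b^2)
noncomputable def Fq' (b z α : ℝ) : ℝ :=
  α * b * (1 - (2*α - 1) * z ^ (2*α - 2)) + (1 - α) * (2*α * z ^ (2*α - 1))
noncomputable def Fq'' (b z α : ℝ) : ℝ :=
  -(α * b * ((2*α - 1) * ((2*α - 2) * z ^ (2*α - 3)))) + (1 - α) * (2*α * ((2*α - 1) * z ^ (2*α - 2)))
noncomputable def phi (b t : ℝ) : ℝ := b ^ t - b ^ (1 - t) - (2*t - 1) * (b - 1)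
lemma inner_deriv (n : ℕ) {z : ℝ} (hz : 0 < z) (hz1 : z ≠ 1)
    (hbz : ((n:ℝ) - 1) + z ≠ 0) (α : ℝ) :
    deriv (fun a => gZ n z a) α
      = 1 - (((n:ℝ) - 1) * z ^ (1 - α) + z ^ α) / (((n:ℝ) - 1) + z) := by
  set b : ℝ := (n:ℝ) - 1 with hbdef
  have hlog : Real.log z ≠ 0 := by
    intro h
    rcases Real.log_eq_zero.mp h with h' | h' | h' <;> [exact hz.ne' h'; exact hz1 h'; linarith]
  have h1 : HasDerivAt (fun a : ℝ => z ^ a) (z ^ α * Real.log z) α :=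
    (Real.hasStrictDerivAt_const_rpow hz α).hasDerivAt
  have h2 : HasDerivAt (fun a : ℝ => z ^ (1 - a)) (-(z ^ (1 - α) * Real.log z)) α := by
    have hc : HasDerivAt (fun a : ℝ => 1 - a) (-1) α := (hasDerivAt_id α).const_sub 1
    have := ((Real.hasStrictDerivAt_const_rpow hz (1 - α)).hasDerivAt).comp α hc
    simpa [mul_comm, Function.comp_def] using this
  have hD : HasDerivAt (fun a => gZ n z a)
      (1 + ((z ^ α * Real.log z) * (z ^ (1 - α) - 1)
        + (b + z ^ α) * (-(z ^ (1 - α) * Real.log z))) / ((b + z) * Real.log z)) α := by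
    unfold gZ
    have := (((hasDerivAt_id α).sub_const 1).add
      ((((h1.const_add b).mul (h2.sub_const 1))).div_const ((b + z) * Real.log z)))
    simpa [hbdef, Pi.add_def] using this
  rw [hD.deriv]
  have hmul : z ^ α * z ^ (1 - α) = z := by
    rw [← Real.rpow_add hz]; norm_num
  field_simp
  ring_nf
lemma outer_hasDeriv (b α : ℝ) {z : ℝ} (hz : 0 < z) (hbz : 0 < b + z) :
    HasDerivAt (fun z' => 1 - (b * z' ^ (1 - α) + z' ^ α) / (b + z'))
      (z ^ (-α) * Fq b z α / (b + z)^2) z := by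
  have hN : HasDerivAt (fun z' : ℝ => b * z' ^ (1 - α) + z' ^ α)
      (b * ((1 - α) * z ^ (1 - α - 1)) + α * z ^ (α - 1)) z :=
    ((Real.hasDerivAt_rpow_const (Or.inl hz.ne')).const_mul b).add
      (Real.hasDerivAt_rpow_const (Or.inl hz.ne'))
  have hDen : HasDerivAt (fun z' : ℝ => b + z') 1 z := (hasDerivAt_id z).const_add b
  have h := (hN.div hDen hbz.ne').const_sub 1
  refine h.congr_deriv ?_
  have e0 : z ^ (1 - α - 1) = (z ^ α)⁻¹ := by
    rw [show (1 - α - 1 : ℝ) = -α by ring, Real.rpow_neg hz.le]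
  have e1 : z ^ (1 - α) = z / z ^ α := by
    rw [show (1 - α : ℝ) = 1 - α from rfl, Real.rpow_sub hz, Real.rpow_one]
  have e2 : z ^ (α - 1) = z ^ α / z := by
    rw [Real.rpow_sub hz, Real.rpow_one]
  have e3 : z ^ (2*α) = z ^ α * z ^ α := by
    rw [show (2*α : ℝ) = α + α by ring, Real.rpow_add hz]
  have e4 : z ^ (2*α - 1) = z ^ α * z ^ α / z := by
    rw [show (2*α - 1 : ℝ) = α + α - 1 by ring, Real.rpow_sub hz, Real.rpow_add hz, Real.rpow_one]
  have e5 : z ^ (-α) = (z ^ α)⁻¹ := Real.rpow_neg hz.le α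
  have hE : (0:ℝ) < z ^ α := Real.rpow_pos_of_pos hz α
  rw [Fq, e0, e1, e2, e3, e4, e5]
  field_simp
  ring
lemma hb_ge (n : ℕ) (hn : 3 ≤ n) : (2:ℝ) ≤ (n:ℝ) - 1 := by
  have : (3:ℝ) ≤ (n:ℝ) := by exact_mod_cast hn
  linarith

lemma gmix_eq (n : ℕ) (hn : 3 ≤ n) {z : ℝ} (hz : 0 < z) (hz1 : z ≠ 1) (α : ℝ) :
    Gmix n z α = z ^ (-α) * Fq ((n:ℝ) - 1) z α / (((n:ℝ) - 1) + z)^2 := by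
  have hb := hb_ge n hn
  have hbz : (0:ℝ) < ((n:ℝ) - 1) + z := by linarith
  unfold Gmix
  have hev : (fun z' => deriv (fun a => gZ n z' a) α)
      =ᶠ[nhds z] (fun z' => 1 - (((n:ℝ) - 1) * z' ^ (1 - α) + z' ^ α) / (((n:ℝ) - 1) + z')) := by
    have hopen : IsOpen {z' : ℝ | 0 < z' ∧ z' ≠ 1} :=
      (isOpen_lt continuous_const continuous_id).inter isOpen_ne
    filter_upwards [hopen.mem_nhds ⟨hz, hz1⟩] with z' hz'
    exact inner_deriv n hz'.1 hz'.2 (by linarith [hz'.1] : ((n:ℝ) - 1) + z' ≠ 0) α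
  rw [hev.deriv_eq, (outer_hasDeriv ((n:ℝ) - 1) α hz hbz).deriv]

lemma gmix_pos_iff (n : ℕ) (hn : 3 ≤ n) {z : ℝ} (hz : 0 < z) (hz1 : z ≠ 1) (α : ℝ) :
    (0 < Gmix n z α ↔ 0 < Fq ((n:ℝ) - 1) z α) := by
  have hb := hb_ge n hn
  have hc : 0 < z ^ (-α) / (((n:ℝ) - 1) + z)^2 :=
    div_pos (Real.rpow_pos_of_pos hz _) (by positivity)
  rw [gmix_eq n hn hz hz1 α, show z ^ (-α) * Fq ((n:ℝ) - 1) z α / (((n:ℝ) - 1) + z)^2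
    = (z ^ (-α) / (((n:ℝ) - 1) + z)^2) * Fq ((n:ℝ) - 1) z α by ring]
  constructor
  · intro h; by_contra h'; push_neg at h'; nlinarith
  · intro h; positivity
lemma gmix_neg_iff (n : ℕ) (hn : 3 ≤ n) {z : ℝ} (hz : 0 < z) (hz1 : z ≠ 1) (α : ℝ) :
    (Gmix n z α < 0 ↔ Fq ((n:ℝ) - 1) z α < 0) := by
  have hb := hb_ge n hn
  have hc : 0 < z ^ (-α) / (((n:ℝ) - 1) + z)^2 :=
    div_pos (Real.rpow_pos_of_pos hz _) (by positivity)
  rw [gmix_eq n hn hz hz1 α, show z ^ (-α) * Fq ((n:ℝ) - 1) z α / (((n:ℝ) - 1) + z)^2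
    = (z ^ (-α) / (((n:ℝ) - 1) + z)^2) * Fq ((n:ℝ) - 1) z α by ring]
  constructor
  · intro h; by_contra h'; push_neg at h'; nlinarith
  · intro h; exact mul_neg_of_pos_of_neg hc h
lemma gmix_zero_iff (n : ℕ) (hn : 3 ≤ n) {z : ℝ} (hz : 0 < z) (hz1 : z ≠ 1) (α : ℝ) :
    (Gmix n z α = 0 ↔ Fq ((n:ℝ) - 1) z α = 0) := by
  have hb := hb_ge n hn
  have hc : 0 < z ^ (-α) / (((n:ℝ) - 1) + z)^2 :=
    div_pos (Real.rpow_pos_of_pos hz _) (by positivity)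
  rw [gmix_eq n hn hz hz1 α, show z ^ (-α) * Fq ((n:ℝ) - 1) z α / (((n:ℝ) - 1) + z)^2
    = (z ^ (-α) / (((n:ℝ) - 1) + z)^2) * Fq ((n:ℝ) - 1) z α by ring]
  simp [mul_eq_zero, hc.ne']
lemma Fq_hasDeriv (b α : ℝ) {z : ℝ} (hz : 0 < z) :
    HasDerivAt (fun z => Fq b z α) (Fq' b z α) z := by
  unfold Fq Fq'
  have h1 : HasDerivAt (fun z : ℝ => z ^ (2*α - 1)) ((2*α - 1) * z ^ (2*α - 1 - 1)) z :=
    Real.hasDerivAt_rpow_const (Or.inl hz.ne')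
  have h2 : HasDerivAt (fun z : ℝ => z ^ (2*α)) ((2*α) * z ^ (2*α - 1)) z := by
    have := Real.hasDerivAt_rpow_const (p := 2*α) (Or.inl hz.ne')
    convert this using 2
  have h := ((((hasDerivAt_id z).sub h1).const_mul (α * b)).add ((h2.sub_const (b^2)).const_mul (1 - α)))
  refine h.congr_deriv ?_
  all_goals (try rw [show (2*α - 1 - 1 : ℝ) = 2*α - 2 by ring]); try ring

lemma Fq'_hasDeriv (b α : ℝ) {z : ℝ} (hz : 0 < z) :
    HasDerivAt (fun z => Fq' b z α) (Fq'' b z α) z := by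
  unfold Fq' Fq''
  have h1 : HasDerivAt (fun z : ℝ => z ^ (2*α - 2)) ((2*α - 2) * z ^ (2*α - 2 - 1)) z :=
    Real.hasDerivAt_rpow_const (Or.inl hz.ne')
  have h2 : HasDerivAt (fun z : ℝ => z ^ (2*α - 1)) ((2*α - 1) * z ^ (2*α - 1 - 1)) z :=
    Real.hasDerivAt_rpow_const (Or.inl hz.ne')
  have h := ((((h1.const_mul (2*α - 1)).const_sub 1).const_mul (α * b)).add
    ((h2.const_mul (2*α)).const_mul (1 - α)))
  refine h.congr_deriv ?_
  rw [show (2*α - 2 - 1 : ℝ) = 2*α - 3 by ring, show (2*α - 1 - 1 : ℝ) = 2*α - 2 by ring]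
  ring

lemma Fq_contOn (b α : ℝ) : ContinuousOn (fun z => Fq b z α) (Ioi 0) :=
  fun z hz => ((Fq_hasDeriv b α hz).continuousAt).continuousWithinAt

lemma Fq_deriv_eq (b α : ℝ) {z : ℝ} (hz : 0 < z) :
    deriv (fun z => Fq b z α) z = Fq' b z α := (Fq_hasDeriv b α hz).deriv

lemma Fq_deriv2_eq (b α : ℝ) {z : ℝ} (hz : 0 < z) :
    deriv^[2] (fun z => Fq b z α) z = Fq'' b z α := by
  have hev : deriv (fun z => Fq b z α) =ᶠ[nhds z] (fun z => Fq' b z α) := by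
    filter_upwards [isOpen_Ioi.mem_nhds (show z ∈ Ioi (0:ℝ) from hz)] with w hw
    exact Fq_deriv_eq b α hw
  simp only [Function.iterate_succ, Function.iterate_zero, Function.comp_apply, Function.id_def]
  rw [hev.deriv_eq, (Fq'_hasDeriv b α hz).deriv]

-- special values
lemma Fq_at_one (b α : ℝ) : Fq b 1 α = (1 - α) * (1 - b^2) := by
  simp [Fq]

lemma Fq_at_b {b : ℝ} (hb : 0 < b) (α : ℝ) : Fq b b α = (2*α - 1) * (b^2 - b ^ (2*α)) := by
  have e : b ^ (2*α - 1) = b ^ (2*α) / b := by rw [Real.rpow_sub hb, Real.rpow_one]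
  rw [Fq, e]; field_simp; ring

lemma Fq_at_z2 {b : ℝ} (hb : 0 < b) {α : ℝ} (hα : 2*α - 1 ≠ 0) :
    Fq b (b ^ (1/(2*α - 1))) α = b * (b ^ (1/(2*α - 1)) - b) := by
  set s := 1/(2*α - 1) with hs
  have h2 : s * (2*α - 1) = 1 := by rw [hs]; field_simp
  have e1 : (b ^ s) ^ (2*α - 1) = b := by
    rw [← Real.rpow_mul hb.le, h2, Real.rpow_one]
  have e2 : (b ^ s) ^ (2*α) = b * b ^ s := by
    have : s * (2*α) = 1 + s := by nlinarith [h2]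
    rw [← Real.rpow_mul hb.le, this, Real.rpow_add hb, Real.rpow_one]
  rw [Fq, e1, e2]; ring

lemma Fq_at_z1 {b : ℝ} (hb : 0 < b) {α : ℝ} (hα : α ≠ 0) :
    Fq b (b ^ (1/(2*α))) α
      = α * b * (b ^ (1/(2*α)) - b ^ (1 - 1/(2*α)) - (2*(1/(2*α)) - 1) * (b - 1)) := by
  set t := 1/(2*α) with ht
  have h2 : t * (2*α) = 1 := by rw [ht]; field_simp
  have e1 : (b ^ t) ^ (2*α) = b := by
    rw [← Real.rpow_mul hb.le, h2, Real.rpow_one]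
  have e2 : (b ^ t) ^ (2*α - 1) = b ^ (1 - t) := by
    rw [← Real.rpow_mul hb.le]
    congr 1
    nlinarith [h2]
  rw [Fq, e1, e2]
  have h3 : α * (2 * t) = 1 := by nlinarith [h2]
  linear_combination (b^2 - b) * h3
lemma phi_hasDeriv {b : ℝ} (hb : 0 < b) (t : ℝ) :
    HasDerivAt (phi b) (b ^ t * Real.log b + b ^ (1 - t) * Real.log b - 2 * (b - 1)) t := by
  unfold phi
  have h1 : HasDerivAt (fun t : ℝ => b ^ t) (b ^ t * Real.log b) t :=
    (Real.hasStrictDerivAt_const_rpow hb t).hasDerivAt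
  have h2 : HasDerivAt (fun t : ℝ => b ^ (1 - t)) (-(b ^ (1 - t) * Real.log b)) t := by
    have hc : HasDerivAt (fun t : ℝ => 1 - t) (-1) t := (hasDerivAt_id t).const_sub 1
    have := ((Real.hasStrictDerivAt_const_rpow hb (1 - t)).hasDerivAt).comp t hc
    simpa [mul_comm, Function.comp_def] using this
  have h3 : HasDerivAt (fun t : ℝ => (2*t - 1) * (b - 1)) (2 * (b - 1)) t := by
    have : HasDerivAt (fun t : ℝ => 2*t - 1) 2 t := by
      simpa using ((hasDerivAt_id t).const_mul 2).sub_const 1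
    simpa using this.mul_const (b - 1)
  refine ((h1.sub h2).sub h3).congr_deriv ?_
  ring

lemma phi_deriv_hasDeriv {b : ℝ} (hb : 0 < b) (t : ℝ) :
    HasDerivAt (fun t => b ^ t * Real.log b + b ^ (1 - t) * Real.log b - 2 * (b - 1))
      ((b ^ t - b ^ (1 - t)) * Real.log b ^ 2) t := by
  have h1 : HasDerivAt (fun t : ℝ => b ^ t) (b ^ t * Real.log b) t :=
    (Real.hasStrictDerivAt_const_rpow hb t).hasDerivAt
  have h2 : HasDerivAt (fun t : ℝ => b ^ (1 - t)) (-(b ^ (1 - t) * Real.log b)) t := by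
    have hc : HasDerivAt (fun t : ℝ => 1 - t) (-1) t := (hasDerivAt_id t).const_sub 1
    have := ((Real.hasStrictDerivAt_const_rpow hb (1 - t)).hasDerivAt).comp t hc
    simpa [mul_comm, Function.comp_def] using this
  refine (((h1.mul_const (Real.log b)).add (h2.mul_const (Real.log b))).sub_const (2 * (b - 1))).congr_deriv ?_
  ring

lemma phi_deriv2 {b : ℝ} (hb : 0 < b) (t : ℝ) :
    deriv^[2] (phi b) t = (b ^ t - b ^ (1 - t)) * Real.log b ^ 2 := by
  have e1 : deriv (phi b) = fun t => b ^ t * Real.log b + b ^ (1 - t) * Real.log b - 2 * (b - 1) :=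
    funext fun t => (phi_hasDeriv hb t).deriv
  simp only [Function.iterate_succ, Function.iterate_zero, Function.comp_apply, Function.id_def]
  rw [e1, (phi_deriv_hasDeriv hb t).deriv]

lemma phi_contOn {b : ℝ} (hb : 0 < b) (s : Set ℝ) : ContinuousOn (phi b) s :=
  fun t _ => ((phi_hasDeriv hb t).continuousAt).continuousWithinAt

lemma phi_strictConvex {b : ℝ} (hb : 1 < b) : StrictConvexOn ℝ (Ici (1/2 : ℝ)) (phi b) := by
  apply strictConvexOn_of_deriv2_pos (convex_Ici _) (phi_contOn (by linarith) _)
  intro t ht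
  rw [interior_Ici] at ht
  rw [phi_deriv2 (by linarith)]
  have hlog : 0 < Real.log b := Real.log_pos hb
  have h1 : b ^ (1 - t) < b ^ t := Real.rpow_lt_rpow_of_exponent_lt hb (by linarith [mem_Ioi.mp ht])
  nlinarith [mul_pos (sub_pos.mpr h1) (pow_pos hlog 2)]

lemma phi_strictConcave {b : ℝ} (hb : 1 < b) : StrictConcaveOn ℝ (Iic (1/2 : ℝ)) (phi b) := by
  apply strictConcaveOn_of_deriv2_neg (convex_Iic _) (phi_contOn (by linarith) _)
  intro t ht
  rw [interior_Iic] at ht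
  rw [phi_deriv2 (by linarith)]
  have hlog : 0 < Real.log b := Real.log_pos hb
  have h1 : b ^ t < b ^ (1 - t) := Real.rpow_lt_rpow_of_exponent_lt hb (by linarith [mem_Iio.mp ht])
  nlinarith [mul_pos (sub_pos.mpr h1) (pow_pos hlog 2)]

lemma phi_zero {b : ℝ} (hb : 0 < b) : phi b 0 = 0 := by
  simp [phi]
lemma phi_half (b : ℝ) : phi b (1/2) = 0 := by
  norm_num [phi]
lemma phi_one {b : ℝ} (hb : 0 < b) : phi b 1 = 0 := by
  simp [phi]
  ring
-- helper to express a point strictly between two others as a strict convex combination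
lemma combo {x y z : ℝ} (hxy : x < y) (hyz : y < z) :
    ∃ a c : ℝ, 0 < a ∧ 0 < c ∧ a + c = 1 ∧ a * x + c * z = y := by
  have hzx : 0 < z - x := by linarith
  refine ⟨(z - y) / (z - x), (y - x) / (z - x), by apply div_pos <;> linarith,
    by apply div_pos <;> linarith, ?_, ?_⟩
  · field_simp; ring
  · field_simp; ring

lemma phi_neg_of_neg {b : ℝ} (hb : 1 < b) {t : ℝ} (ht : t < 0) : phi b t < 0 := by
  obtain ⟨a, c, ha, hc, hac, hx⟩ := combo ht (show (0:ℝ) < 1/2 by norm_num)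
  have h := (phi_strictConcave hb).2 (mem_Iic.mpr (by linarith : t ≤ 1/2)) (mem_Iic.mpr le_rfl)
    (by linarith) ha hc hac
  rw [smul_eq_mul, smul_eq_mul, smul_eq_mul, smul_eq_mul, hx, phi_zero (by linarith),
    phi_half] at h
  nlinarith

lemma phi_pos_of_mem1 {b : ℝ} (hb : 1 < b) {t : ℝ} (ht0 : 0 < t) (ht : t < 1/2) : 0 < phi b t := by
  obtain ⟨a, c, ha, hc, hac, hx⟩ := combo ht0 ht
  have h := (phi_strictConcave hb).2 (mem_Iic.mpr (by norm_num : (0:ℝ) ≤ 1/2)) (mem_Iic.mpr le_rfl)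
    (by norm_num) ha hc hac
  rw [smul_eq_mul, smul_eq_mul, smul_eq_mul, smul_eq_mul, hx, phi_zero (by linarith),
    phi_half] at h
  nlinarith

lemma phi_neg_of_mem2 {b : ℝ} (hb : 1 < b) {t : ℝ} (ht0 : 1/2 < t) (ht : t < 1) : phi b t < 0 := by
  obtain ⟨a, c, ha, hc, hac, hx⟩ := combo ht0 ht
  have h := (phi_strictConvex hb).2 (mem_Ici.mpr le_rfl) (mem_Ici.mpr (by linarith : (1:ℝ)/2 ≤ 1))
    (by norm_num) ha hc hac
  rw [smul_eq_mul, smul_eq_mul, smul_eq_mul, smul_eq_mul, hx, phi_one (by linarith),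
    phi_half] at h
  nlinarith

lemma phi_pos_of_one_lt {b : ℝ} (hb : 1 < b) {t : ℝ} (ht : 1 < t) : 0 < phi b t := by
  obtain ⟨a, c, ha, hc, hac, hx⟩ := combo (show (1/2:ℝ) < 1 by norm_num) ht
  have h := (phi_strictConvex hb).2 (mem_Ici.mpr le_rfl) (mem_Ici.mpr (by linarith : (1:ℝ)/2 ≤ t))
    (by linarith) ha hc hac
  rw [smul_eq_mul, smul_eq_mul, smul_eq_mul, smul_eq_mul, hx, phi_one (by linarith),
    phi_half] at h
  nlinarith
lemma Fq_strictAnti {b α : ℝ} (hb : 1 < b) (hα : α < 0) :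
    StrictAntiOn (fun z => Fq b z α) (Ioi 0) := by
  apply strictAntiOn_of_deriv_neg (convex_Ioi 0) (Fq_contOn b α)
  intro z hz
  rw [interior_Ioi] at hz
  have hz : (0:ℝ) < z := hz
  rw [Fq_deriv_eq b α hz]
  have p1 : (0:ℝ) < z ^ (2*α - 2) := Real.rpow_pos_of_pos hz _
  have p2 : (0:ℝ) < z ^ (2*α - 1) := Real.rpow_pos_of_pos hz _
  unfold Fq'
  nlinarith [mul_pos (mul_pos (show (0:ℝ) < -α by linarith) (show (0:ℝ) < b by linarith))
      (mul_pos (show (0:ℝ) < 1 - 2*α by linarith) p1),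
    mul_pos (mul_pos (show (0:ℝ) < -2*α by linarith) (show (0:ℝ) < 1 - α by linarith)) p2,
    mul_pos (show (0:ℝ) < -α by linarith) (show (0:ℝ) < b by linarith)]

lemma Fq_strictMono {b α : ℝ} (hb : 1 < b) (hα0 : 0 < α) (hα : α < 1/2) :
    StrictMonoOn (fun z => Fq b z α) (Ioi 0) := by
  apply strictMonoOn_of_deriv_pos (convex_Ioi 0) (Fq_contOn b α)
  intro z hz
  rw [interior_Ioi] at hz
  have hz : (0:ℝ) < z := hz
  rw [Fq_deriv_eq b α hz]
  have p1 : (0:ℝ) < z ^ (2*α - 2) := Real.rpow_pos_of_pos hz _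
  have p2 : (0:ℝ) < z ^ (2*α - 1) := Real.rpow_pos_of_pos hz _
  unfold Fq'
  nlinarith [mul_pos (mul_pos (mul_pos hα0 (show (0:ℝ) < b by linarith))
      (show (0:ℝ) < 1 - 2*α by linarith)) p1,
    mul_pos (mul_pos (mul_pos hα0 (show (0:ℝ) < 1 - α by linarith)) p2) (show (0:ℝ) < 2 by norm_num),
    mul_pos hα0 (show (0:ℝ) < b by linarith)]

lemma Fq_strictConvex {b α : ℝ} (hb : 1 < b) (hα0 : 1/2 < α) (hα : α < 1) :
    StrictConvexOn ℝ (Ioi 0) (fun z => Fq b z α) := by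
  apply strictConvexOn_of_deriv2_pos (convex_Ioi 0) (Fq_contOn b α)
  intro z hz
  rw [interior_Ioi] at hz
  have hz : (0:ℝ) < z := hz
  rw [Fq_deriv2_eq b α hz]
  have p1 : (0:ℝ) < z ^ (2*α - 3) := Real.rpow_pos_of_pos hz _
  have p2 : (0:ℝ) < z ^ (2*α - 2) := Real.rpow_pos_of_pos hz _
  unfold Fq''
  nlinarith [mul_pos (mul_pos (mul_pos (show (0:ℝ) < α by linarith) (show (0:ℝ) < b by linarith))
      (mul_pos (show (0:ℝ) < 2*α - 1 by linarith) (show (0:ℝ) < 2 - 2*α by linarith))) p1,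
    mul_pos (mul_pos (mul_pos (show (0:ℝ) < 1 - α by linarith) (show (0:ℝ) < 2*α by linarith))
      (show (0:ℝ) < 2*α - 1 by linarith)) p2]

lemma Fq_strictConcave {b α : ℝ} (hb : 1 < b) (hα : 1 < α) :
    StrictConcaveOn ℝ (Ioi 0) (fun z => Fq b z α) := by
  apply strictConcaveOn_of_deriv2_neg (convex_Ioi 0) (Fq_contOn b α)
  intro z hz
  rw [interior_Ioi] at hz
  have hz : (0:ℝ) < z := hz
  rw [Fq_deriv2_eq b α hz]
  have p1 : (0:ℝ) < z ^ (2*α - 3) := Real.rpow_pos_of_pos hz _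
  have p2 : (0:ℝ) < z ^ (2*α - 2) := Real.rpow_pos_of_pos hz _
  unfold Fq''
  nlinarith [mul_pos (mul_pos (mul_pos (show (0:ℝ) < α by linarith) (show (0:ℝ) < b by linarith))
      (mul_pos (show (0:ℝ) < 2*α - 1 by linarith) (show (0:ℝ) < 2*α - 2 by linarith))) p1,
    mul_pos (mul_pos (mul_pos (show (0:ℝ) < α - 1 by linarith) (show (0:ℝ) < 2*α by linarith))
      (show (0:ℝ) < 2*α - 1 by linarith)) p2]
lemma convex_chord_neg {f : ℝ → ℝ} (hconv : StrictConvexOn ℝ (Ioi 0) f) {γ : ℝ} (hγ : 1 < γ)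
    (hf1 : f 1 < 0) (hfγ : f γ = 0) {z : ℝ} (h1z : 1 < z) (hzγ : z < γ) : f z < 0 := by
  obtain ⟨a, c, ha, hc, hac, hx⟩ := combo h1z hzγ
  have h := hconv.2 (mem_Ioi.mpr one_pos) (mem_Ioi.mpr (by linarith : (0:ℝ) < γ))
    (by linarith) ha hc hac
  rw [smul_eq_mul, smul_eq_mul, smul_eq_mul, smul_eq_mul, hx, hfγ] at h
  nlinarith

lemma convex_chord_pos {f : ℝ → ℝ} (hconv : StrictConvexOn ℝ (Ioi 0) f) {γ : ℝ} (hγ : 1 < γ)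
    (hf1 : f 1 < 0) (hfγ : f γ = 0) {z : ℝ} (hzγ : γ < z) : 0 < f z := by
  obtain ⟨a, c, ha, hc, hac, hx⟩ := combo hγ hzγ
  have h := hconv.2 (mem_Ioi.mpr one_pos) (mem_Ioi.mpr (by linarith : (0:ℝ) < z))
    (by linarith) ha hc hac
  rw [smul_eq_mul, smul_eq_mul, smul_eq_mul, smul_eq_mul, hx, hfγ] at h
  nlinarith

lemma concave_chord_pos {f : ℝ → ℝ} (hconc : StrictConcaveOn ℝ (Ioi 0) f) {γ : ℝ} (hγ : 1 < γ)
    (hf1 : 0 < f 1) (hfγ : f γ = 0) {z : ℝ} (h1z : 1 < z) (hzγ : z < γ) : 0 < f z := by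
  obtain ⟨a, c, ha, hc, hac, hx⟩ := combo h1z hzγ
  have h := hconc.2 (mem_Ioi.mpr one_pos) (mem_Ioi.mpr (by linarith : (0:ℝ) < γ))
    (by linarith) ha hc hac
  rw [smul_eq_mul, smul_eq_mul, smul_eq_mul, smul_eq_mul, hx, hfγ] at h
  nlinarith

lemma concave_chord_neg {f : ℝ → ℝ} (hconc : StrictConcaveOn ℝ (Ioi 0) f) {γ : ℝ} (hγ : 1 < γ)
    (hf1 : 0 < f 1) (hfγ : f γ = 0) {z : ℝ} (hzγ : γ < z) : f z < 0 := by
  obtain ⟨a, c, ha, hc, hac, hx⟩ := combo hγ hzγ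
  have h := hconc.2 (mem_Ioi.mpr one_pos) (mem_Ioi.mpr (by linarith : (0:ℝ) < z))
    (by linarith) ha hc hac
  rw [smul_eq_mul, smul_eq_mul, smul_eq_mul, smul_eq_mul, hx, hfγ] at h
  nlinarith

lemma Fq_small_neg {b α : ℝ} (hb : 1 < b) (hα0 : 0 < α) (hα : α < 1) {z : ℝ}
    (hz : 0 < z) (hz1 : z ≤ 1) : Fq b z α < 0 := by
  have h1 : z ^ (1:ℝ) ≤ z ^ (2*α - 1) :=
    Real.rpow_le_rpow_of_exponent_ge hz hz1 (by linarith)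
  rw [Real.rpow_one] at h1
  have h2 : z ^ (2*α) ≤ 1 := Real.rpow_le_one hz.le hz1 (by linarith)
  have hab : 0 < α * b := by positivity
  unfold Fq
  nlinarith [mul_nonneg hab.le (sub_nonneg.mpr h1),
    mul_pos (show (0:ℝ) < 1 - α by linarith) (show (0:ℝ) < b^2 - z^(2*α) by nlinarith)]

lemma Fq_small_pos {b α : ℝ} (hb : 1 < b) (hα : 1 < α) {z : ℝ}
    (hz : 0 < z) (hz1 : z ≤ 1) : 0 < Fq b z α := by
  have h1 : z ^ (2*α - 1) ≤ z ^ (1:ℝ) :=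
    Real.rpow_le_rpow_of_exponent_ge hz hz1 (by linarith)
  rw [Real.rpow_one] at h1
  have h2 : z ^ (2*α) ≤ 1 := Real.rpow_le_one hz.le hz1 (by linarith)
  have hab : 0 < α * b := by positivity
  unfold Fq
  nlinarith [mul_nonneg hab.le (sub_nonneg.mpr h1),
    mul_pos (show (0:ℝ) < α - 1 by linarith) (show (0:ℝ) < b^2 - z^(2*α) by nlinarith)]
lemma Fq_at_z1' {b : ℝ} (hb : 0 < b) {α : ℝ} (hα : α ≠ 0) :
    Fq b (b ^ (1/(2*α))) α = α * b * phi b (1/(2*α)) := Fq_at_z1 hb hα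

-- Case (i): α < 0
lemma caseI {b α : ℝ} (hb : 2 ≤ b) (hα : α < 0) :
    ∃ γ ∈ Ioo (b ^ (1/(2*α))) (b ^ (1/(2*α - 1))),
      0 < γ ∧ γ ≠ 1 ∧ (∀ z, 0 < z → z < γ → 0 < Fq b z α) ∧ Fq b γ α = 0 ∧
        (∀ z, 0 < z → γ < z → Fq b z α < 0) := by
  have hb1 : (1:ℝ) < b := by linarith
  have hb0 : (0:ℝ) < b := by linarith
  have ht : 1/(2*α) < 0 := by
    apply div_neg_of_pos_of_neg one_pos; linarith
  have hts : 1/(2*α) < 1/(2*α - 1) := by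
    have h1 : 2*α < 0 := by linarith
    have h2 : 2*α - 1 < 0 := by linarith
    have key : 1/(2*α) - 1/(2*α - 1) = -1/((2*α)*(2*α - 1)) := by
      rw [div_sub_div _ _ h1.ne h2.ne, neg_div]
      congr 1
      ring
    have hpos : 0 < (2*α)*(2*α - 1) := mul_pos_of_neg_of_neg h1 h2
    have : -1/((2*α)*(2*α - 1)) < 0 := div_neg_of_neg_of_pos (by norm_num) hpos
    linarith [key ▸ this]
  set z1 := b ^ (1/(2*α)) with hz1def
  set z2 := b ^ (1/(2*α - 1)) with hz2def
  have hz1pos : 0 < z1 := Real.rpow_pos_of_pos hb0 _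
  have hz2pos : 0 < z2 := Real.rpow_pos_of_pos hb0 _
  have hz12 : z1 < z2 := Real.rpow_lt_rpow_of_exponent_lt hb1 hts
  have hz2lt1 : z2 < 1 := by
    have h : z2 < b ^ (0:ℝ) :=
      Real.rpow_lt_rpow_of_exponent_lt hb1 (by apply div_neg_of_pos_of_neg one_pos; linarith)
    rwa [Real.rpow_zero] at h
  have hFz1 : 0 < Fq b z1 α := by
    rw [hz1def, Fq_at_z1' hb0 hα.ne]
    have h := phi_neg_of_neg hb1 ht
    nlinarith [mul_pos_of_neg_of_neg (mul_neg_of_neg_of_pos hα hb0) h]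
  have hFz2 : Fq b z2 α < 0 := by
    rw [hz2def, Fq_at_z2 hb0 (by intro h; nlinarith)]
    nlinarith [hz2lt1]
  have hcont : ContinuousOn (fun z => Fq b z α) (Icc z1 z2) :=
    (Fq_contOn b α).mono (fun x hx => lt_of_lt_of_le hz1pos hx.1)
  obtain ⟨γ, hγmem, hγ0⟩ := intermediate_value_Ioo' hz12.le hcont
    (show (0:ℝ) ∈ Ioo (Fq b z2 α) (Fq b z1 α) from ⟨hFz2, hFz1⟩)
  have hanti := Fq_strictAnti hb1 hα
  have hγpos : 0 < γ := lt_trans hz1pos hγmem.1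
  refine ⟨γ, hγmem, hγpos, by intro h; rw [h] at hγmem; linarith [hγmem.2, hz2lt1], ?_, hγ0, ?_⟩
  · intro z hz hzγ
    have := hanti (mem_Ioi.mpr hz) (mem_Ioi.mpr hγpos) hzγ
    simpa [hγ0] using this
  · intro z hzpos hγz
    have := hanti (mem_Ioi.mpr hγpos) (mem_Ioi.mpr hzpos) hγz
    simpa [hγ0] using this

-- Case (iii): 0 < α < 1/2
lemma caseIII {b α : ℝ} (hb : 2 ≤ b) (hα0 : 0 < α) (hα : α < 1/2) :
    ∃ γ ∈ Ioo b (b ^ (1/(2*α))),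
      0 < γ ∧ γ ≠ 1 ∧ (∀ z, 0 < z → z < γ → Fq b z α < 0) ∧ Fq b γ α = 0 ∧
        (∀ z, 0 < z → γ < z → 0 < Fq b z α) := by
  have hb1 : (1:ℝ) < b := by linarith
  have hb0 : (0:ℝ) < b := by linarith
  have ht : 1 < 1/(2*α) := by
    rw [lt_div_iff₀ (by linarith : (0:ℝ) < 2*α)]; linarith
  set z1 := b ^ (1/(2*α)) with hz1def
  have hbz1 : b < z1 := by
    have h : b ^ (1:ℝ) < z1 := Real.rpow_lt_rpow_of_exponent_lt hb1 ht
    rwa [Real.rpow_one] at h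
  have hFb : Fq b b α < 0 := by
    rw [Fq_at_b hb0]
    have h : b ^ (2*α) < b^2 := by
      have h2 : b ^ (2*α) < b ^ ((2:ℕ):ℝ) :=
        Real.rpow_lt_rpow_of_exponent_lt hb1 (by push_cast; linarith)
      rwa [Real.rpow_natCast] at h2
    nlinarith
  have hFz1 : 0 < Fq b z1 α := by
    rw [hz1def, Fq_at_z1' hb0 hα0.ne']
    have h := phi_pos_of_one_lt hb1 ht
    nlinarith [mul_pos (mul_pos hα0 hb0) h]
  have hcont : ContinuousOn (fun z => Fq b z α) (Icc b z1) :=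
    (Fq_contOn b α).mono (fun x hx => lt_of_lt_of_le hb0 hx.1)
  obtain ⟨γ, hγmem, hγ0⟩ := intermediate_value_Ioo hbz1.le hcont
    (show (0:ℝ) ∈ Ioo (Fq b b α) (Fq b z1 α) from ⟨hFb, hFz1⟩)
  have hmono := Fq_strictMono hb1 hα0 hα
  have hγpos : 0 < γ := lt_trans hb0 hγmem.1
  refine ⟨γ, hγmem, hγpos, by intro h; rw [h] at hγmem; linarith [hγmem.1], ?_, hγ0, ?_⟩
  · intro z hz hzγ
    have := hmono (mem_Ioi.mpr hz) (mem_Ioi.mpr hγpos) hzγ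
    simpa [hγ0] using this
  · intro z hzpos hγz
    have := hmono (mem_Ioi.mpr hγpos) (mem_Ioi.mpr hzpos) hγz
    simpa [hγ0] using this

-- Case (v): 1/2 < α < 1
lemma caseV {b α : ℝ} (hb : 2 ≤ b) (hα0 : 1/2 < α) (hα : α < 1) :
    ∃ γ ∈ Ioo (b ^ (1/(2*α))) b,
      0 < γ ∧ γ ≠ 1 ∧ (∀ z, 0 < z → z < γ → Fq b z α < 0) ∧ Fq b γ α = 0 ∧
        (∀ z, 0 < z → γ < z → 0 < Fq b z α) := by
  have hb1 : (1:ℝ) < b := by linarith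
  have hb0 : (0:ℝ) < b := by linarith
  have h2α : (0:ℝ) < 2*α := by linarith
  have ht1 : 1/(2*α) < 1 := by rw [div_lt_one h2α]; linarith
  have ht0 : 1/2 < 1/(2*α) := by
    rw [div_lt_div_iff₀ (by norm_num) h2α]; linarith
  set z1 := b ^ (1/(2*α)) with hz1def
  have hz1b : z1 < b := by
    have h : z1 < b ^ (1:ℝ) := Real.rpow_lt_rpow_of_exponent_lt hb1 ht1
    rwa [Real.rpow_one] at h
  have hz1gt1 : 1 < z1 := by
    have h : b ^ (0:ℝ) < z1 := Real.rpow_lt_rpow_of_exponent_lt hb1 (by linarith)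
    rwa [Real.rpow_zero] at h
  have hFz1 : Fq b z1 α < 0 := by
    rw [hz1def, Fq_at_z1' hb0 (by linarith : α ≠ 0)]
    have h := phi_neg_of_mem2 hb1 ht0 ht1
    nlinarith [mul_neg_of_pos_of_neg (mul_pos (by linarith : (0:ℝ) < α) hb0) h]
  have hFb : 0 < Fq b b α := by
    rw [Fq_at_b hb0]
    have h : b ^ (2*α) < b^2 := by
      have h2 : b ^ (2*α) < b ^ ((2:ℕ):ℝ) :=
        Real.rpow_lt_rpow_of_exponent_lt hb1 (by push_cast; linarith)
      rwa [Real.rpow_natCast] at h2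
    nlinarith
  have hz1pos : 0 < z1 := by linarith
  have hcont : ContinuousOn (fun z => Fq b z α) (Icc z1 b) :=
    (Fq_contOn b α).mono (fun x hx => lt_of_lt_of_le hz1pos hx.1)
  obtain ⟨γ, hγmem, hγ0⟩ := intermediate_value_Ioo hz1b.le hcont
    (show (0:ℝ) ∈ Ioo (Fq b z1 α) (Fq b b α) from ⟨hFz1, hFb⟩)
  have hconv := Fq_strictConvex hb1 hα0 hα
  have hγ1 : 1 < γ := lt_trans hz1gt1 hγmem.1
  have hF1 : Fq b 1 α < 0 := by
    rw [Fq_at_one]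
    nlinarith [mul_pos (show (0:ℝ) < 1 - α by linarith) (show (0:ℝ) < b^2 - 1 by nlinarith)]
  refine ⟨γ, hγmem, by linarith, by intro h; rw [h] at hγ1; linarith, ?_, hγ0, ?_⟩
  · intro z hz hzγ
    rcases le_or_gt z 1 with h1 | h1
    · exact Fq_small_neg hb1 (by linarith) hα hz h1
    · exact convex_chord_neg hconv hγ1 hF1 hγ0 h1 hzγ
  · intro z hzpos hγz
    exact convex_chord_pos hconv hγ1 hF1 hγ0 hγz

-- Case (vii): 1 < α
lemma caseVII {b α : ℝ} (hb : 2 ≤ b) (hα : 1 < α) :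
    ∃ γ ∈ Ioo (b ^ (1/(2*α))) (b ^ (1/(2*α - 1))),
      0 < γ ∧ γ ≠ 1 ∧ (∀ z, 0 < z → z < γ → 0 < Fq b z α) ∧ Fq b γ α = 0 ∧
        (∀ z, 0 < z → γ < z → Fq b z α < 0) := by
  have hb1 : (1:ℝ) < b := by linarith
  have hb0 : (0:ℝ) < b := by linarith
  have h1 : (0:ℝ) < 2*α := by linarith
  have h2 : (0:ℝ) < 2*α - 1 := by linarith
  have ht0 : 0 < 1/(2*α) := by positivity
  have ht : 1/(2*α) < 1/2 := by
    rw [div_lt_div_iff₀ h1 (by norm_num)]; linarith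
  have hts : 1/(2*α) < 1/(2*α - 1) := by
    apply one_div_lt_one_div_of_lt h2; linarith
  have hs1 : 1/(2*α - 1) < 1 := by rw [div_lt_one h2]; linarith
  set z1 := b ^ (1/(2*α)) with hz1def
  set z2 := b ^ (1/(2*α - 1)) with hz2def
  have hz12 : z1 < z2 := Real.rpow_lt_rpow_of_exponent_lt hb1 hts
  have hz1gt1 : 1 < z1 := by
    have h : b ^ (0:ℝ) < z1 := Real.rpow_lt_rpow_of_exponent_lt hb1 ht0
    rwa [Real.rpow_zero] at h
  have hz2b : z2 < b := by
    have h : z2 < b ^ (1:ℝ) := Real.rpow_lt_rpow_of_exponent_lt hb1 hs1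
    rwa [Real.rpow_one] at h
  have hFz1 : 0 < Fq b z1 α := by
    rw [hz1def, Fq_at_z1' hb0 (by linarith : α ≠ 0)]
    have h := phi_pos_of_mem1 hb1 ht0 ht
    nlinarith [mul_pos (mul_pos (by linarith : (0:ℝ) < α) hb0) h]
  have hFz2 : Fq b z2 α < 0 := by
    rw [hz2def, Fq_at_z2 hb0 h2.ne']
    nlinarith [hz2b]
  have hz1pos : 0 < z1 := by linarith
  have hcont : ContinuousOn (fun z => Fq b z α) (Icc z1 z2) :=
    (Fq_contOn b α).mono (fun x hx => lt_of_lt_of_le hz1pos hx.1)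
  obtain ⟨γ, hγmem, hγ0⟩ := intermediate_value_Ioo' hz12.le hcont
    (show (0:ℝ) ∈ Ioo (Fq b z2 α) (Fq b z1 α) from ⟨hFz2, hFz1⟩)
  have hconc := Fq_strictConcave hb1 hα
  have hγ1 : 1 < γ := lt_trans hz1gt1 hγmem.1
  have hF1 : 0 < Fq b 1 α := by
    rw [Fq_at_one]
    nlinarith [mul_pos_of_neg_of_neg (show 1 - α < (0:ℝ) by linarith) (show 1 - b^2 < (0:ℝ) by nlinarith)]
  refine ⟨γ, hγmem, by linarith, by intro h; rw [h] at hγ1; linarith, ?_, hγ0, ?_⟩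
  · intro z hz hzγ
    rcases le_or_gt z 1 with hle | hlt
    · exact Fq_small_pos hb1 hα hz hle
    · exact concave_chord_pos hconc hγ1 hF1 hγ0 hlt hzγ
  · intro z hzpos hγz
    exact concave_chord_neg hconc hγ1 hF1 hγ0 hγz

theorem stmt17 (n : ℕ) (hn : 3 ≤ n) :
    (∀ α : ℝ, α < 0 →
      ∃ γ ∈ Set.Ioo (((n : ℝ) - 1) ^ (1 / (2 * α))) (((n : ℝ) - 1) ^ (1 / (2 * α - 1))),
        (∀ z ∈ Set.Ioo (0 : ℝ) 1 ∪ Set.Ioi 1, z < γ → 0 < Gmix n z α) ∧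
        Gmix n γ α = 0 ∧
        (∀ z ∈ Set.Ioo (0 : ℝ) 1 ∪ Set.Ioi 1, γ < z → Gmix n z α < 0)) ∧
    (∀ z ∈ Set.Ioo (0 : ℝ) 1 ∪ Set.Ioi 1, Gmix n z 0 < 0) ∧
    (∀ α ∈ Set.Ioo (0 : ℝ) (1 / 2),
      ∃ γ ∈ Set.Ioo ((n : ℝ) - 1) (((n : ℝ) - 1) ^ (1 / (2 * α))),
        (∀ z ∈ Set.Ioo (0 : ℝ) 1 ∪ Set.Ioi 1, z < γ → Gmix n z α < 0) ∧
        Gmix n γ α = 0 ∧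
        (∀ z ∈ Set.Ioo (0 : ℝ) 1 ∪ Set.Ioi 1, γ < z → 0 < Gmix n z α)) ∧
    ((∀ z ∈ Set.Ioo (0 : ℝ) 1 ∪ Set.Ioi 1, z < (n : ℝ) - 1 → Gmix n z (1 / 2) < 0) ∧
      Gmix n ((n : ℝ) - 1) (1 / 2) = 0 ∧
      (∀ z ∈ Set.Ioo (0 : ℝ) 1 ∪ Set.Ioi 1, (n : ℝ) - 1 < z → 0 < Gmix n z (1 / 2))) ∧
    (∀ α ∈ Set.Ioo (1 / 2 : ℝ) 1,
      ∃ γ ∈ Set.Ioo (((n : ℝ) - 1) ^ (1 / (2 * α))) ((n : ℝ) - 1),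
        (∀ z ∈ Set.Ioo (0 : ℝ) 1 ∪ Set.Ioi 1, z < γ → Gmix n z α < 0) ∧
        Gmix n γ α = 0 ∧
        (∀ z ∈ Set.Ioo (0 : ℝ) 1 ∪ Set.Ioi 1, γ < z → 0 < Gmix n z α)) ∧
    (∀ z ∈ Set.Ioo (0 : ℝ) 1 ∪ Set.Ioi 1, Gmix n z 1 = 0) ∧
    (∀ α : ℝ, 1 < α →
      ∃ γ ∈ Set.Ioo (((n : ℝ) - 1) ^ (1 / (2 * α))) (((n : ℝ) - 1) ^ (1 / (2 * α - 1))),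
        (∀ z ∈ Set.Ioo (0 : ℝ) 1 ∪ Set.Ioi 1, z < γ → 0 < Gmix n z α) ∧
        Gmix n γ α = 0 ∧
        (∀ z ∈ Set.Ioo (0 : ℝ) 1 ∪ Set.Ioi 1, γ < z → Gmix n z α < 0)) := by
  have hb : (2:ℝ) ≤ (n:ℝ) - 1 := hb_ge n hn
  have hdom : ∀ z ∈ Set.Ioo (0:ℝ) 1 ∪ Set.Ioi 1, 0 < z ∧ z ≠ 1 := by
    rintro z (⟨h1, h2⟩ | h)
    · exact ⟨h1, ne_of_lt h2⟩
    · exact ⟨lt_trans one_pos (mem_Ioi.mp h), ne_of_gt (mem_Ioi.mp h)⟩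
  refine ⟨?_, ?_, ?_, ?_, ?_, ?_, ?_⟩
  · -- (i) α < 0
    intro α hα
    obtain ⟨γ, hγmem, hγpos, hγne1, hbelow, hzero, habove⟩ := caseI hb hα
    refine ⟨γ, hγmem, ?_, (gmix_zero_iff n hn hγpos hγne1 α).mpr hzero, ?_⟩
    · intro z hz hzγ
      obtain ⟨hz0, hz1⟩ := hdom z hz
      exact (gmix_pos_iff n hn hz0 hz1 α).mpr (hbelow z hz0 hzγ)
    · intro z hz hγz
      obtain ⟨hz0, hz1⟩ := hdom z hz
      exact (gmix_neg_iff n hn hz0 hz1 α).mpr (habove z hz0 hγz)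
  · -- (ii) α = 0
    intro z hz
    obtain ⟨hz0, hz1⟩ := hdom z hz
    rw [gmix_neg_iff n hn hz0 hz1 0]
    have : Fq ((n:ℝ) - 1) z 0 = 1 - ((n:ℝ) - 1)^2 := by
      unfold Fq
      rw [show 2*(0:ℝ) = 0 by norm_num, Real.rpow_zero]
      ring
    rw [this]; nlinarith
  · -- (iii) 0 < α < 1/2
    rintro α ⟨hα0, hα⟩
    obtain ⟨γ, hγmem, hγpos, hγne1, hbelow, hzero, habove⟩ := caseIII hb hα0 hα
    refine ⟨γ, hγmem, ?_, (gmix_zero_iff n hn hγpos hγne1 α).mpr hzero, ?_⟩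
    · intro z hz hzγ
      obtain ⟨hz0, hz1⟩ := hdom z hz
      exact (gmix_neg_iff n hn hz0 hz1 α).mpr (hbelow z hz0 hzγ)
    · intro z hz hγz
      obtain ⟨hz0, hz1⟩ := hdom z hz
      exact (gmix_pos_iff n hn hz0 hz1 α).mpr (habove z hz0 hγz)
  · -- (iv) α = 1/2
    have hF : ∀ z : ℝ, 0 < z → Fq ((n:ℝ) - 1) z (1/2)
        = ((((n:ℝ) - 1) + 1)/2) * (z - ((n:ℝ) - 1)) := by
      intro z hz
      unfold Fq
      rw [show 2*(1/2:ℝ) - 1 = 0 by norm_num, show 2*(1/2:ℝ) = 1 by norm_num,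
        Real.rpow_zero, Real.rpow_one]
      ring
    refine ⟨?_, ?_, ?_⟩
    · intro z hz hzb
      obtain ⟨hz0, hz1⟩ := hdom z hz
      rw [gmix_neg_iff n hn hz0 hz1 (1/2), hF z hz0]
      nlinarith
    · have hb0 : (0:ℝ) < (n:ℝ) - 1 := by linarith
      rw [gmix_zero_iff n hn hb0 (by linarith : ((n:ℝ) - 1) ≠ 1) (1/2), hF _ hb0]
      ring
    · intro z hz hbz
      obtain ⟨hz0, hz1⟩ := hdom z hz
      rw [gmix_pos_iff n hn hz0 hz1 (1/2), hF z hz0]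
      nlinarith
  · -- (v) 1/2 < α < 1
    rintro α ⟨hα0, hα⟩
    obtain ⟨γ, hγmem, hγpos, hγne1, hbelow, hzero, habove⟩ := caseV hb hα0 hα
    refine ⟨γ, hγmem, ?_, (gmix_zero_iff n hn hγpos hγne1 α).mpr hzero, ?_⟩
    · intro z hz hzγ
      obtain ⟨hz0, hz1⟩ := hdom z hz
      exact (gmix_neg_iff n hn hz0 hz1 α).mpr (hbelow z hz0 hzγ)
    · intro z hz hγz
      obtain ⟨hz0, hz1⟩ := hdom z hz
      exact (gmix_pos_iff n hn hz0 hz1 α).mpr (habove z hz0 hγz)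
  · -- (vi) α = 1
    intro z hz
    obtain ⟨hz0, hz1⟩ := hdom z hz
    rw [gmix_zero_iff n hn hz0 hz1 1]
    unfold Fq
    rw [show 2*(1:ℝ) - 1 = 1 by norm_num, Real.rpow_one]
    ring
  · -- (vii) 1 < α
    intro α hα
    obtain ⟨γ, hγmem, hγpos, hγne1, hbelow, hzero, habove⟩ := caseVII hb hα
    refine ⟨γ, hγmem, ?_, (gmix_zero_iff n hn hγpos hγne1 α).mpr hzero, ?_⟩
    · intro z hz hzγ
      obtain ⟨hz0, hz1⟩ := hdom z hz
      exact (gmix_pos_iff n hn hz0 hz1 α).mpr (hbelow z hz0 hzγ)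
    · intro z hz hγz
      obtain ⟨hz0, hz1⟩ := hdom z hz
      exact (gmix_neg_iff n hn hz0 hz1 α).mpr (habove z hz0 hγz)
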